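/- Post's Correspondence Problem reduces to satisfiability of straight-line string constraints with replaceall where the pattern may be a variable: given nonempty strings α₁,…,α_N and β₁,…,β_N over Σ, the PCP instance has a solution iff the formula ⋀_{i∈[N]} (x_i = replaceall(x_{i-1}, i, α_i) ∧ y_i = replaceall(y_{i-1}, i, β_i)) ∧ z = replaceall(x_N, y_N, $) ∧ x₀ = y₀ ∧ x₀ ∈ (1+⋯+N)⁺ ∧ z ∈ {$} is satisfiable, where the index letters 1,…,N and $ are fresh symbols not in Σ. -/

import Mathlib

/-- `replaceAllStr p v u` replaces every (leftmost) occurrence of the constant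
pattern string `p` in `u` by `v`. -/
def replaceAllStr {A : Type*} [DecidableEq A] (p v u : List A) : List A :=
  match p, u with
  | [], u => u
  | _ :: _, [] => []
  | q :: p', b :: u' =>
      if (q :: p') <+: (b :: u') then
        v ++ replaceAllStr (q :: p') v ((b :: u').drop (p'.length + 1))
      else b :: replaceAllStr (q :: p') v u'
termination_by u.length
decreasing_by
  · simp only [List.length_drop, List.length_cons]; omega
  · simp only [List.length_cons]; omega

lemma replaceAllStr_nil' {A : Type*} [DecidableEq A] (q : A) (p' v : List A) :
    replaceAllStr (q :: p') v [] = [] := by rw [replaceAllStr]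

lemma replaceAllStr_singleton {A : Type*} [DecidableEq A] (a : A) (v u : List A) :
    replaceAllStr [a] v u = u.flatMap (fun c => if c = a then v else [c]) := by
  induction u with
  | nil => rw [replaceAllStr]; rfl
  | cons b u ih =>
    rw [replaceAllStr]
    by_cases h : a = b
    · subst h
      rw [if_pos (by simp), List.flatMap_cons, if_pos rfl]
      simp [ih]
    · rw [if_neg (by simp [List.cons_prefix_cons, h]), List.flatMap_cons,
        if_neg (fun hc => h hc.symm), ih]
      rfl

lemma replaceAllStr_self {A : Type*} [DecidableEq A] (u v : List A) (h : u ≠ []) :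
    replaceAllStr u v u = v := by
  match u with
  | [] => exact absurd rfl h
  | q :: p' =>
    rw [replaceAllStr, if_pos (List.prefix_refl _)]
    have h2 : (q :: p').drop (p'.length + 1) = [] := by
      apply List.drop_eq_nil_of_le; simp
    rw [h2, replaceAllStr_nil', List.append_nil]

lemma replaceAllStr_ne_nil {A : Type*} [DecidableEq A] (p v u : List A)
    (hp : p ≠ []) (hv : v ≠ []) (hu : u ≠ []) : replaceAllStr p v u ≠ [] := by
  match p, u with
  | [], _ => exact absurd rfl hp
  | _ :: _, [] => exact absurd rfl hu
  | q :: p', b :: u' =>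
    rw [replaceAllStr]
    split
    · intro hc
      exact hv (List.append_eq_nil_iff.mp hc).1
    · simp

lemma eq_of_replaceAllStr_eq {A : Type*} [DecidableEq A] (p u : List A) (d : A)
    (hp : p ≠ []) (hd : d ∉ u) (h : replaceAllStr p [d] u = [d]) : u = p := by
  match p, u with
  | [], _ => exact absurd rfl hp
  | q :: p', [] => rw [replaceAllStr_nil'] at h; exact absurd h (by simp)
  | q :: p', b :: u' =>
    rw [replaceAllStr] at h
    split at h
    · rename_i hpre
      rw [List.singleton_append] at h
      have h2 : replaceAllStr (q :: p') [d] ((b :: u').drop (p'.length + 1)) = [] := by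
        simpa using h
      have hdrop : (b :: u').drop (p'.length + 1) = [] := by
        by_contra hne
        exact replaceAllStr_ne_nil _ _ _ (by simp) (by simp) hne h2
      have hlen : (b :: u').length ≤ (q :: p').length := by
        have := List.drop_eq_nil_iff.mp hdrop
        simpa using this
      obtain ⟨t, ht⟩ := hpre
      have : t = [] := by
        have := congrArg List.length ht
        simp at this
        rw [List.length_cons, List.length_cons] at hlen
        exact List.eq_nil_of_length_eq_zero (by omega)
      rw [this, List.append_nil] at ht
      exact ht.symm
    · have : b = d := by simpa using congrArg (·.head?) h
      exact absurd (this ▸ (List.mem_cons_self : b ∈ b :: u')) hd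

lemma subst_step {S : Type*} [DecidableEq S] {N : ℕ} (γ : Fin N → List S)
    (is : List (Fin N)) (k : Fin N) :
    replaceAllStr [Sum.inr (Sum.inl k)] ((γ k).map Sum.inl)
      ((is.map (fun i : Fin N => if i.val < k.val then ((γ i).map (Sum.inl : S → S ⊕ (Fin N ⊕ Unit))) else [Sum.inr (Sum.inl i)])).flatten)
    = (is.map (fun i : Fin N => if i.val < k.val + 1 then ((γ i).map (Sum.inl : S → S ⊕ (Fin N ⊕ Unit))) else [Sum.inr (Sum.inl i)])).flatten := by
  rw [replaceAllStr_singleton]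
  induction is with
  | nil => simp
  | cons j is ih =>
    simp only [List.map_cons, List.flatten_cons, List.flatMap_append, ih]
    congr 1
    by_cases h : j.val < k.val
    · rw [if_pos h, if_pos (by omega)]
      simp [List.flatMap_map, ← List.map_eq_flatMap]
    · rw [if_neg h]
      by_cases h2 : j = k
      · subst h2
        rw [if_pos (by omega)]
        simp
      · rw [if_neg (by omega)]
        have : j.val ≠ k.val := fun hc => h2 (Fin.ext hc)
        simp [Fin.ext_iff, this]

lemma flatten_map_singleton {A B : Type*} (f : A → B) (l : List A) :
    (l.map (fun a => [f a])).flatten = l.map f := by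
  induction l <;> simp_all

lemma exists_map_of_forall {A B : Type*} (f : A → B) :
    ∀ u : List B, (∀ c ∈ u, ∃ i, c = f i) → ∃ l : List A, u = l.map f := by
  intro u
  induction u with
  | nil => exact fun _ => ⟨[], rfl⟩
  | cons b u ih =>
    intro h
    obtain ⟨i, hi⟩ := h b List.mem_cons_self
    obtain ⟨l, hl⟩ := ih (fun c hc => h c (List.mem_cons_of_mem _ hc))
    exact ⟨i :: l, by simp [hi, hl]⟩

/-- Post's Correspondence Problem reduces to satisfiability of straight-line
string constraints with `replaceall` where the pattern may be a variable.
The alphabet `Σ` is extended with fresh index letters `1,…,N` (`Sum.inr (Sum.inl i)`)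
and `$` (`Sum.inr (Sum.inr ())`).  The PCP instance `α, β` has a solution iff the
formula `⋀_{i∈[N]} (xᵢ = replaceall(xᵢ₋₁, i, αᵢ) ∧ yᵢ = replaceall(yᵢ₋₁, i, βᵢ)) ∧
z = replaceall(x_N, y_N, $) ∧ x₀ = y₀ ∧ x₀ ∈ (1+⋯+N)⁺ ∧ z ∈ {$}` is satisfiable. -/
theorem pcp_reduces_to_replaceall {S : Type*} [DecidableEq S] (N : ℕ)
    (α β : Fin N → List S) (hα : ∀ i, α i ≠ []) (hβ : ∀ i, β i ≠ []) :
    (∃ is : List (Fin N), is ≠ [] ∧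
        (is.map α).flatten = (is.map β).flatten) ↔
      (∃ (x y : Fin (N + 1) → List (S ⊕ (Fin N ⊕ Unit))) (z : List (S ⊕ (Fin N ⊕ Unit))),
        (∀ i : Fin N,
          x i.succ = replaceAllStr [Sum.inr (Sum.inl i)] ((α i).map Sum.inl) (x i.castSucc) ∧
          y i.succ = replaceAllStr [Sum.inr (Sum.inl i)] ((β i).map Sum.inl) (y i.castSucc)) ∧
        z = replaceAllStr (y (Fin.last N)) [Sum.inr (Sum.inr ())] (x (Fin.last N)) ∧
        x 0 = y 0 ∧
        (x 0 ≠ [] ∧ ∀ c ∈ x 0, ∃ i : Fin N, c = Sum.inr (Sum.inl i)) ∧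
        z = [Sum.inr (Sum.inr ())]) := by
  constructor
  · rintro ⟨is, hne, heq⟩
    refine ⟨fun k => (is.map (fun i : Fin N => if i.val < k.val then ((α i).map Sum.inl)
        else [Sum.inr (Sum.inl i)])).flatten,
      fun k => (is.map (fun i : Fin N => if i.val < k.val then ((β i).map Sum.inl)
        else [Sum.inr (Sum.inl i)])).flatten,
      [Sum.inr (Sum.inr ())], ?_, ?_, ?_, ?_, ?_⟩
    · intro i
      constructor <;>
        · simp only [Fin.val_succ, Fin.coe_castSucc]
          exact (subst_step _ is i).symm
    · have hx : (is.map (fun i : Fin N => if i.val < (Fin.last N).val then ((α i).map (Sum.inl : S → S ⊕ (Fin N ⊕ Unit)))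
          else [Sum.inr (Sum.inl i)])).flatten = ((is.map α).flatten).map Sum.inl := by
        rw [List.map_flatten, List.map_map]
        congr 1
        apply List.map_congr_left
        intro i _
        simp [i.isLt]
      have hy : (is.map (fun i : Fin N => if i.val < (Fin.last N).val then ((β i).map (Sum.inl : S → S ⊕ (Fin N ⊕ Unit)))
          else [Sum.inr (Sum.inl i)])).flatten = ((is.map β).flatten).map Sum.inl := by
        rw [List.map_flatten, List.map_map]
        congr 1
        apply List.map_congr_left
        intro i _
        simp [i.isLt]
      beta_reduce
      rw [hx, hy, heq]
      have hne2 : ((is.map β).flatten).map (Sum.inl : S → S ⊕ (Fin N ⊕ Unit)) ≠ [] := by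
        obtain ⟨j, is', rfl⟩ : ∃ j is', is = j :: is' := by
          cases is with
          | nil => exact absurd rfl hne
          | cons j is' => exact ⟨j, is', rfl⟩
        simp only [List.map_cons, List.flatten_cons, List.map_append, ne_eq,
          List.append_eq_nil_iff, not_and]
        intro hc
        exact absurd (List.map_eq_nil_iff.mp hc) (hβ j)
      exact (replaceAllStr_self _ _ hne2).symm
    · simp
    · constructor
      · have : (is.map (fun i : Fin N => if i.val < (0 : Fin (N+1)).val then ((α i).map (Sum.inl : S → S ⊕ (Fin N ⊕ Unit)))
            else [Sum.inr (Sum.inl i)])).flatten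
            = is.map (fun i => Sum.inr (Sum.inl i)) := by
          simp only [Fin.val_zero, Nat.not_lt_zero, if_false]
          exact flatten_map_singleton _ is
        beta_reduce
        rw [this]
        simpa using hne
      · intro c hc
        beta_reduce at hc
        simp only [Fin.val_zero, Nat.not_lt_zero, if_false] at hc
        rw [flatten_map_singleton] at hc
        obtain ⟨i, _, rfl⟩ := List.mem_map.mp hc
        exact ⟨i, rfl⟩
    · rfl
  · rintro ⟨x, y, z, hstep, hz, hxy0, ⟨hx0ne, hx0mem⟩, hzd⟩
    obtain ⟨is, his⟩ := exists_map_of_forall (fun i : Fin N => Sum.inr (Sum.inl i)) (x 0) hx0mem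
    have hisne : is ≠ [] := by
      rintro rfl
      exact hx0ne (by simpa using his)
    have hX : ∀ k : Fin (N + 1), x k = (is.map (fun i : Fin N => if i.val < k.val
        then ((α i).map Sum.inl) else [Sum.inr (Sum.inl i)])).flatten := by
      intro k
      induction k using Fin.induction with
      | zero =>
        simp only [Fin.val_zero, Nat.not_lt_zero, if_false]
        rw [flatten_map_singleton]
        exact his
      | succ i ih =>
        rw [(hstep i).1, ih]
        simp only [Fin.coe_castSucc, Fin.val_succ]
        exact subst_step _ is i
    have hY : ∀ k : Fin (N + 1), y k = (is.map (fun i : Fin N => if i.val < k.val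
        then ((β i).map Sum.inl) else [Sum.inr (Sum.inl i)])).flatten := by
      intro k
      induction k using Fin.induction with
      | zero =>
        simp only [Fin.val_zero, Nat.not_lt_zero, if_false]
        rw [flatten_map_singleton]
        rw [← hxy0]
        exact his
      | succ i ih =>
        rw [(hstep i).2, ih]
        simp only [Fin.coe_castSucc, Fin.val_succ]
        exact subst_step _ is i
    have hxlast : x (Fin.last N) = ((is.map α).flatten).map Sum.inl := by
      rw [hX, List.map_flatten, List.map_map]
      congr 1
      apply List.map_congr_left
      intro i _
      simp [i.isLt]
    have hylast : y (Fin.last N) = ((is.map β).flatten).map Sum.inl := by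
      rw [hY, List.map_flatten, List.map_map]
      congr 1
      apply List.map_congr_left
      intro i _
      simp [i.isLt]
    have hylast_ne : y (Fin.last N) ≠ [] := by
      rw [hylast]
      obtain ⟨j, is', rfl⟩ : ∃ j is', is = j :: is' := by
        cases is with
        | nil => exact absurd rfl hisne
        | cons j is' => exact ⟨j, is', rfl⟩
      simp only [List.map_cons, List.flatten_cons, List.map_append, ne_eq,
        List.append_eq_nil_iff, not_and]
      intro hc
      exact absurd (List.map_eq_nil_iff.mp hc) (hβ j)
    have hdnotin : (Sum.inr (Sum.inr ()) : S ⊕ (Fin N ⊕ Unit)) ∉ x (Fin.last N) := by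
      rw [hxlast]
      intro hc
      obtain ⟨a, _, ha⟩ := List.mem_map.mp hc
      exact absurd ha (by simp)
    have hxy : x (Fin.last N) = y (Fin.last N) :=
      eq_of_replaceAllStr_eq _ _ _ hylast_ne hdnotin (hzd ▸ hz).symm
    rw [hxlast, hylast] at hxy
    refine ⟨is, hisne, ?_⟩
    exact List.map_injective_iff.mpr Sum.inl_injective hxy
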